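/- arXiv:2011.13962 — 3 statements merged into one kernel-verified Lean document; each statement's English description precedes it below -/
import Mathlib

section
/- If K has pushouts and M is a class of morphisms closed under composition and under pushout, then the class of M-effective squares is closed under vertical composition. -/
open CategoryTheory CategoryTheory.Limits

/-- If `K` has pushouts and `M` contains identities, is closed under composition and
under pushout, then `M`-effective squares (viewed as morphisms in the arrow category,
with composition being vertical composition of squares) are closed under composition.
A square `(u, v) : f ⟶ f'` is `M`-effective when the comparison morphism from the
pushout of `(f, u)` to the codomain of `f'` lies in `M`. -/
theorem M_effective_closed_under_vertical_composition {K : Type*} [Category K] [HasPushouts K]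
    (M : MorphismProperty K)
    (hid : ∀ X : K, M (𝟙 X))
    (hcomp : ∀ {X Y Z : K} (a : X ⟶ Y) (b : Y ⟶ Z), M a → M b → M (a ≫ b))
    (hpo : ∀ {X Y Z W : K} {a : X ⟶ Y} {b : X ⟶ Z} {c : Y ⟶ W} {d : Z ⟶ W},
      IsPushout a b c d → M a → M d)
    {A B A' B' A'' B'' : K}
    (f : A ⟶ B) (f' : A' ⟶ B') (f'' : A'' ⟶ B'')
    (u : A ⟶ A') (v : B ⟶ B') (u' : A' ⟶ A'') (v' : B' ⟶ B'')
    (w₁ : f ≫ v = u ≫ f') (w₂ : f' ≫ v' = u' ≫ f'')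
    (e₁ : M (pushout.desc v f' w₁))
    (e₂ : M (pushout.desc v' f'' w₂)) :
    M (pushout.desc (v ≫ v') f''
      (show f ≫ v ≫ v' = (u ≫ u') ≫ f'' by
        rw [← Category.assoc, w₁, Category.assoc, w₂, ← Category.assoc])) := by
  -- P₁ = pushout f u, P₂ = pushout f (u ≫ u'), Q = pushout f' u'
  have wbig : f ≫ v ≫ v' = (u ≫ u') ≫ f'' := by
    rw [← Category.assoc, w₁, Category.assoc, w₂, ← Category.assoc]
  -- r : P₁ ⟶ P₂
  have hr : f ≫ pushout.inl f (u ≫ u') = u ≫ (u' ≫ pushout.inr f (u ≫ u')) := by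
    rw [pushout.condition, Category.assoc]
  set r : pushout f u ⟶ pushout f (u ≫ u') :=
    pushout.desc (pushout.inl f (u ≫ u')) (u' ≫ pushout.inr f (u ≫ u')) hr with hrdef
  -- q : P₂ ⟶ Q
  have hq : f ≫ v ≫ pushout.inl f' u' = (u ≫ u') ≫ pushout.inr f' u' := by
    rw [← Category.assoc, w₁, Category.assoc, pushout.condition, Category.assoc]
  set q : pushout f (u ≫ u') ⟶ pushout f' u' :=
    pushout.desc (v ≫ pushout.inl f' u') (pushout.inr f' u') hq with hqdef
  have hrl : pushout.inl f u ≫ r = pushout.inl f (u ≫ u') := by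
    rw [hrdef]; exact pushout.inl_desc _ _ _
  have hrr : pushout.inr f u ≫ r = u' ≫ pushout.inr f (u ≫ u') := by
    rw [hrdef]; exact pushout.inr_desc _ _ _
  have hql : pushout.inl f (u ≫ u') ≫ q = v ≫ pushout.inl f' u' := by
    rw [hqdef]; exact pushout.inl_desc _ _ _
  have hqr : pushout.inr f (u ≫ u') ≫ q = pushout.inr f' u' := by
    rw [hqdef]; exact pushout.inr_desc _ _ _
  -- the square (e₁, r, inl, q) is a pushout
  have hsq : pushout.desc v f' w₁ ≫ pushout.inl f' u' = r ≫ q := by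
    apply pushout.hom_ext
    · rw [← Category.assoc, ← Category.assoc, hrl, pushout.inl_desc, hql]
    · simp only [← Category.assoc, hrr, pushout.inr_desc]
      rw [Category.assoc, hqr, pushout.condition]
  have hpush : IsPushout (pushout.desc v f' w₁) r (pushout.inl f' u') q := by
    refine IsPushout.of_isColimit (PushoutCocone.IsColimit.mk hsq
      (fun s => pushout.desc s.inl (pushout.inr f (u ≫ u') ≫ s.inr) (by
        calc f' ≫ s.inl = pushout.inr f u ≫ pushout.desc v f' w₁ ≫ s.inl := by
              rw [← Category.assoc, pushout.inr_desc]
          _ = pushout.inr f u ≫ r ≫ s.inr := by rw [s.condition]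
          _ = u' ≫ pushout.inr f (u ≫ u') ≫ s.inr := by
              rw [← Category.assoc, hrr, Category.assoc])) ?_ ?_ ?_)
    · intro s
      exact pushout.inl_desc _ _ _
    · intro s
      apply pushout.hom_ext
      · have h := congrArg (pushout.inl f u ≫ ·) s.condition
        simp only [← Category.assoc] at h
        rw [pushout.inl_desc, hrl] at h
        rw [← Category.assoc, hql, Category.assoc, pushout.inl_desc]
        exact h
      · rw [← Category.assoc, hqr]
        rw [pushout.inr_desc]
    · intro s m hm1 hm2
      apply pushout.hom_ext
      · rw [pushout.inl_desc]; exact hm1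
      · rw [pushout.inr_desc, ← hm2, ← Category.assoc, hqr]
  have hMq : M q := hpo hpush e₁
  have hfin : pushout.desc (v ≫ v') f'' wbig = q ≫ pushout.desc v' f'' w₂ := by
    apply pushout.hom_ext
    · rw [pushout.inl_desc, ← Category.assoc, pushout.inl_desc, Category.assoc, pushout.inl_desc]
    · rw [pushout.inr_desc, ← Category.assoc, pushout.inr_desc, pushout.inr_desc]
  rw [show (pushout.desc (v ≫ v') f'' _ : pushout f (u ≫ u') ⟶ B'') =
      q ≫ pushout.desc v' f'' w₂ from hfin]
  exact hcomp _ _ hMq e₂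
end

section
/- The pushout, in the arrow category, of an M-effective square along an arbitrary commutative square is again M-effective. -/
open CategoryTheory CategoryTheory.Limits

/-- The pushout, in the arrow category, of an `M`-effective square along an arbitrary
commutative square is again `M`-effective.  The pushout in `K²` is computed
componentwise: `B'` is the pushout of `(m₀, a)` and `D'` is the pushout of `(m₂, c)`. -/
theorem M_effective_stable_under_pushout_in_arrow_category {K : Type*} [Category K]
    [HasPushouts K] (M : MorphismProperty K)
    (hpo : ∀ {X Y Z W : K} {a : X ⟶ Y} {b : X ⟶ Z} {c : Y ⟶ W} {d : Z ⟶ W},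
      IsPushout a b c d → M a → M d)
    {A B C D A' B' C' D' : K}
    (m₁ : A ⟶ C) (m₃ : B ⟶ D) (m₁' : A' ⟶ C') (m₃' : B' ⟶ D')
    (m₀ : A ⟶ B) (m₂ : C ⟶ D) (m₀' : A' ⟶ B') (m₂' : C' ⟶ D')
    (a : A ⟶ A') (b : B ⟶ B') (c : C ⟶ C') (d : D ⟶ D')
    -- the original square, as a morphism `(m₀, m₂) : m₁ ⟶ m₃` of `K²`
    (w : m₁ ≫ m₂ = m₀ ≫ m₃)
    -- the square `(a, c) : m₁ ⟶ m₁'`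
    (wac : m₁ ≫ c = a ≫ m₁')
    -- the componentwise pushouts
    (hB' : IsPushout m₀ a b m₀') (hD' : IsPushout m₂ c d m₂')
    -- the induced square `(m₀', m₂') : m₁' ⟶ m₃'` and `(b, d) : m₃ ⟶ m₃'`
    (w' : m₁' ≫ m₂' = m₀' ≫ m₃') (wbd : m₃ ≫ d = b ≫ m₃')
    -- the original square is `M`-effective
    (he : M (pushout.desc m₂ m₃ w)) :
    M (pushout.desc m₂' m₃' w') := by
  set e : pushout m₁ m₀ ⟶ D := pushout.desc m₂ m₃ w with he'
  set e' : pushout m₁' m₀' ⟶ D' := pushout.desc m₂' m₃' w' with he''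
  set f : pushout m₁ m₀ ⟶ pushout m₁' m₀' :=
    pushout.map m₁ m₀ m₁' m₀' c b a wac hB'.w with hf
  have einl : pushout.inl m₁ m₀ ≫ e = m₂ := pushout.inl_desc _ _ _
  have einr : pushout.inr m₁ m₀ ≫ e = m₃ := pushout.inr_desc _ _ _
  have einl' : pushout.inl m₁' m₀' ≫ e' = m₂' := pushout.inl_desc _ _ _
  have einr' : pushout.inr m₁' m₀' ≫ e' = m₃' := pushout.inr_desc _ _ _
  have finl : pushout.inl m₁ m₀ ≫ f = c ≫ pushout.inl m₁' m₀' := by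
    rw [hf]; exact pushout.inl_desc _ _ _
  have finr : pushout.inr m₁ m₀ ≫ f = b ≫ pushout.inr m₁' m₀' := by
    rw [hf]; exact pushout.inr_desc _ _ _
  have hw : e ≫ d = f ≫ e' := by
    apply pushout.hom_ext
    · rw [← Category.assoc, einl, ← Category.assoc, finl, Category.assoc, einl', hD'.w]
    · rw [← Category.assoc, einr, ← Category.assoc, finr, Category.assoc, einr', wbd]
  have hcond : ∀ s : PushoutCocone e f,
      m₂ ≫ s.inl = c ≫ (pushout.inl m₁' m₀' ≫ s.inr) := by
    intro s
    rw [← einl, Category.assoc, s.condition, ← Category.assoc, finl, Category.assoc]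
  have hP : IsPushout e f d e' := by
    refine IsPushout.of_isColimit
      (PushoutCocone.IsColimit.mk hw (fun s => hD'.desc s.inl _ (hcond s)) ?_ ?_ ?_)
    · intro s; exact hD'.inl_desc _ _ _
    · intro s
      have hk1 : d ≫ hD'.desc s.inl _ (hcond s) = s.inl := hD'.inl_desc _ _ _
      have hk2 : m₂' ≫ hD'.desc s.inl _ (hcond s) = pushout.inl m₁' m₀' ≫ s.inr :=
        hD'.inr_desc _ _ _
      apply pushout.hom_ext
      · rw [← Category.assoc, einl', hk2]
      · rw [← Category.assoc, einr']
        apply hB'.hom_ext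
        · rw [← Category.assoc, ← wbd, Category.assoc, hk1, ← Category.assoc, ← einr,
            Category.assoc, s.condition, ← Category.assoc, finr, Category.assoc]
        · rw [← Category.assoc, ← w', Category.assoc, hk2, ← Category.assoc, pushout.condition,
            Category.assoc]
    · intro s m hm1 hm2
      apply hD'.hom_ext
      · rw [hm1, hD'.inl_desc]
      · rw [hD'.inr_desc, ← einl', Category.assoc, hm2]
  exact hpo hP he
end

section
/- The pasting of an M-effective square with a pushout square on top is M-effective, provided M is closed under composition and pushout-stable. -/
open CategoryTheory CategoryTheory.Limits

/-- The pasting of an `M`-effective square with a pushout square on top is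
`M`-effective, provided `M` contains identities, is closed under composition and is
stable under pushouts.  Here `S₁` is an `M`-effective square on span `(f, g)` with
cocone `(h, k)` and vertex `D`, `S₂` is a pushout square on span `(g' : C ⟶ C',
k : C ⟶ D)` with vertex `D'`, and the pasted square is on span `(f, g ≫ g')` with
cocone `(h ≫ d', k')` and vertex `D'`. -/
theorem paste_effective_with_pushout {K : Type*} [Category K] [HasPushouts K]
    (M : MorphismProperty K)
    (hid : ∀ X : K, M (𝟙 X))
    (hcomp : ∀ {X Y Z : K} (a : X ⟶ Y) (b : Y ⟶ Z), M a → M b → M (a ≫ b))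
    (hpo : ∀ {X Y Z W : K} {a : X ⟶ Y} {b : X ⟶ Z} {c : Y ⟶ W} {d : Z ⟶ W},
      IsPushout a b c d → M a → M d)
    {A B C D C' D' : K}
    (f : A ⟶ B) (g : A ⟶ C) (h : B ⟶ D) (k : C ⟶ D)
    (g' : C ⟶ C') (k' : C' ⟶ D') (d' : D ⟶ D')
    (w₁ : f ≫ h = g ≫ k)
    (heff : M (pushout.desc h k w₁))
    (hS₂ : IsPushout k g' d' k') :
    M (pushout.desc (h ≫ d') k'
      (show f ≫ h ≫ d' = (g ≫ g') ≫ k' by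
        rw [← Category.assoc, w₁, Category.assoc, hS₂.w, ← Category.assoc])) := by
  set e : pushout f g ⟶ D := pushout.desc h k w₁ with he
  set ε : pushout f (g ≫ g') ⟶ D' := pushout.desc (h ≫ d') k' _ with hε
  have wι : f ≫ pushout.inl f (g ≫ g') = g ≫ g' ≫ pushout.inr f (g ≫ g') := by
    rw [← Category.assoc]; exact pushout.condition
  set ι : pushout f g ⟶ pushout f (g ≫ g') :=
    pushout.desc (pushout.inl f (g ≫ g')) (g' ≫ pushout.inr f (g ≫ g')) wι with hι
  -- the square (inr, g', ι, inr) is a pushout, by cancellation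
  have hout : IsPushout f (g ≫ g') (pushout.inl f g ≫ ι) (pushout.inr f (g ≫ g')) := by
    rw [show pushout.inl f g ≫ ι = pushout.inl f (g ≫ g') from pushout.inl_desc _ _ _]
    exact IsPushout.of_hasPushout f (g ≫ g')
  have sqC : IsPushout (pushout.inr f g) g' ι (pushout.inr f (g ≫ g')) :=
    IsPushout.of_top hout (pushout.inr_desc _ _ _) (IsPushout.of_hasPushout f g)
  -- the square (e, ι, d', ε) is a pushout, by cancellation against hS₂
  have hbig : IsPushout (pushout.inr f g ≫ e) g' d'
      (pushout.inr f (g ≫ g') ≫ ε) := by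
    rw [show pushout.inr f g ≫ e = k from pushout.inr_desc _ _ _,
      show pushout.inr f (g ≫ g') ≫ ε = k' from pushout.inr_desc _ _ _]
    exact hS₂
  have p : e ≫ d' = ι ≫ ε := by
    apply pushout.hom_ext
    · simp only [he, hι, hε, pushout.inl_desc_assoc, pushout.inl_desc]
    · simp only [he, hι, hε, pushout.inr_desc_assoc, Category.assoc, pushout.inr_desc, hS₂.w]
  have δ : IsPushout e ι d' ε := IsPushout.of_left hbig p sqC
  exact hpo δ heff
end
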